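/- Let R be a commutative ring, let m ≥ 1, let x₁, …, x_m ∈ R, and fix l with 0 ≤ l ≤ m. Let e₁ < e₂ < ⋯ < e_m be the elements of {0, 1, …, m} ∖ {l} in increasing order, and let A be the m×m matrix with entries A(i, j) = x_i^{e_j}. Then det A = e_{m−l}(x₁, …, x_m) · ∏_{1 ≤ i < j ≤ m} (x_j − x_i), where e_k denotes the k-th elementary symmetric polynomial (e₀ = 1). -/

import Mathlib

/-- The generalized Vandermonde determinant with column exponents
`{0, 1, …, m} \ {l}` equals the elementary symmetric polynomial `e_{m-l}` times the
Vandermonde product `∏_{i<j} (x_j - x_i)`. -/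
theorem stmt_17 (R : Type*) [CommRing R] (m : ℕ) (hm : 1 ≤ m) (x : Fin m → R)
    (l : ℕ) (hl : l ≤ m)
    (e : Fin m → ℕ) (he : ∀ j : Fin m, e j = if (j : ℕ) < l then (j : ℕ) else (j : ℕ) + 1) :
    Matrix.det (Matrix.of fun i j : Fin m => x i ^ e j) =
      (∑ s ∈ Finset.powersetCard (m - l) (Finset.univ : Finset (Fin m)), ∏ i ∈ s, x i) *
        ∏ j : Fin m, ∏ i ∈ Finset.Iio j, (x j - x i) := by
  classical
  set E : R := ∑ s ∈ Finset.powersetCard (m - l) (Finset.univ : Finset (Fin m)), ∏ i ∈ s, x i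
    with hE
  set W : R := ∏ i : Fin m, ∏ j ∈ Finset.Ioi i, (x j - x i) with hW
  -- the Ioi-form Vandermonde product equals the Iio-form one
  have hWV : W = ∏ j : Fin m, ∏ i ∈ Finset.Iio j, (x j - x i) := by
    rw [hW]
    exact Finset.prod_comm' (by simp)
  rw [← hWV]
  -- the minors indexed by the deleted column
  set D : Fin (m + 1) → R :=
    fun p => Matrix.det (Matrix.of fun i j' : Fin m => x i ^ ((p.succAbove j') : ℕ)) with hD
  set l' : Fin (m + 1) := ⟨l, Nat.lt_succ_of_le hl⟩ with hl'
  have hval : ∀ (p : Fin (m + 1)) (j' : Fin m),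
      ((p.succAbove j') : ℕ) = if (j' : ℕ) < (p : ℕ) then (j' : ℕ) else (j' : ℕ) + 1 := by
    intro p j'
    rcases lt_or_ge (Fin.castSucc j') p with h | h
    · rw [Fin.succAbove_of_castSucc_lt _ _ h, if_pos (by simpa [Fin.lt_def] using h)]
      simp
    · rw [Fin.succAbove_of_le_castSucc _ _ h, if_neg (by simpa [Fin.le_def, Nat.not_lt] using h)]
      simp
  have hDl : Matrix.det (Matrix.of fun i j : Fin m => x i ^ e j) = D l' := by
    congr 1
    ext i j
    rw [Matrix.of_apply, Matrix.of_apply, he j, hval]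
  rw [hDl]
  -- the polynomial Vandermonde
  set v : Fin (m + 1) → Polynomial R := Fin.cons Polynomial.X (fun i => Polynomial.C (x i))
    with hv
  have hdet1 : Matrix.det (Matrix.vandermonde v) =
      ∑ j : Fin (m + 1), (-1) ^ (j : ℕ) * Polynomial.X ^ (j : ℕ) * Polynomial.C (D j) := by
    rw [Matrix.det_succ_row_zero]
    refine Finset.sum_congr rfl fun j _ => ?_
    have h0 : Matrix.vandermonde v 0 j = Polynomial.X ^ (j : ℕ) := by
      simp [Matrix.vandermonde_apply, hv]
    have hsub : (Matrix.vandermonde v).submatrix Fin.succ j.succAbove =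
        (Matrix.of fun i j' : Fin m => x i ^ ((j.succAbove j') : ℕ)).map
          (Polynomial.C : R →+* Polynomial R) := by
      refine Matrix.ext fun i j' => ?_
      show v (Fin.succ i) ^ ((j.succAbove j' : ℕ)) = Polynomial.C (x i ^ ((j.succAbove j') : ℕ))
      rw [hv, Fin.cons_succ, map_pow]
    rw [h0, hsub, ← RingHom.mapMatrix_apply, ← RingHom.map_det]
  have hdet2 : Matrix.det (Matrix.vandermonde v) =
      (-1) ^ m * ((∏ i : Fin m, (Polynomial.X - Polynomial.C (x i))) * Polynomial.C W) := by
    rw [Matrix.det_vandermonde, Fin.prod_univ_succ]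
    have h1 : ∏ j ∈ Finset.Ioi (0 : Fin (m + 1)), (v j - v 0) =
        ∏ i : Fin m, (Polynomial.C (x i) - Polynomial.X) := by
      rw [Fin.prod_Ioi_zero]
      simp [hv]
    have h2 : ∀ i : Fin m, ∏ j ∈ Finset.Ioi i.succ, (v j - v i.succ) =
        ∏ j ∈ Finset.Ioi i, Polynomial.C (x j - x i) := by
      intro i
      rw [Fin.prod_Ioi_succ]
      simp [hv]
    rw [h1]
    have h3 : ∏ i : Fin m, ∏ j ∈ Finset.Ioi (Fin.succ i), (v j - v (Fin.succ i)) =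
        Polynomial.C W := by
      rw [hW, map_prod]
      refine Finset.prod_congr rfl fun i _ => ?_
      rw [h2, map_prod]
    rw [h3]
    have h4 : ∏ i : Fin m, (Polynomial.C (x i) - Polynomial.X) =
        (-1) ^ m * ∏ i : Fin m, (Polynomial.X - Polynomial.C (x i)) := by
      calc ∏ i : Fin m, (Polynomial.C (x i) - Polynomial.X)
          = ∏ i : Fin m, (-1) * (Polynomial.X - Polynomial.C (x i)) := by
            exact Finset.prod_congr rfl fun i _ => by ring
        _ = (-1) ^ m * ∏ i : Fin m, (Polynomial.X - Polynomial.C (x i)) := by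
            rw [Finset.prod_mul_distrib, Finset.prod_const]
            simp
    rw [h4]
    ring
  -- compare coefficients of X^l
  have hterm : ∀ j : Fin (m + 1),
      ((-1) ^ (j : ℕ) * Polynomial.X ^ (j : ℕ) * Polynomial.C (D j) : Polynomial R).coeff l =
        if (j : ℕ) = l then (-1) ^ l * D j else 0 := by
    intro j
    have hrw : ((-1) ^ (j : ℕ) * Polynomial.X ^ (j : ℕ) * Polynomial.C (D j) : Polynomial R) =
        Polynomial.C ((-1) ^ (j : ℕ) * D j) * Polynomial.X ^ (j : ℕ) := by
      rw [Polynomial.C_mul, Polynomial.C_pow, Polynomial.C_neg, Polynomial.C_1]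
      ring
    rw [hrw, Polynomial.coeff_C_mul, Polynomial.coeff_X_pow]
    by_cases h : (j : ℕ) = l
    · subst h
      simp
    · rw [if_neg (fun hh => h hh.symm), if_neg h, mul_zero]
  have hcoeff1 : (Matrix.det (Matrix.vandermonde v)).coeff l = (-1) ^ l * D l' := by
    rw [hdet1, Polynomial.finset_sum_coeff,
      Finset.sum_eq_single l'
        (fun j _ hj => by
          rw [hterm j, if_neg (fun h => hj (Fin.ext (by simpa [hl'] using h)))])
        (fun h => absurd (Finset.mem_univ l') h),
      hterm l', if_pos (by simp [hl'])]
  have hprod_coeff : (∏ i : Fin m, (Polynomial.X - Polynomial.C (x i))).coeff l =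
      (-1) ^ (m - l) * E := by
    have hs : ∏ i : Fin m, (Polynomial.X - Polynomial.C (x i)) =
        ((Finset.univ.val.map x).map fun t => Polynomial.X - Polynomial.C t).prod := by
      rw [Multiset.map_map]
      rfl
    have hcard : Multiset.card (Finset.univ.val.map x) = m := by simp
    rw [hs, Multiset.prod_X_sub_C_coeff _ (by rw [hcard]; exact hl), hcard,
      Finset.esymm_map_val, hE]
  have hcoeff2 : (Matrix.det (Matrix.vandermonde v)).coeff l =
      (-1) ^ m * ((-1) ^ (m - l) * E * W) := by
    rw [hdet2]
    have hneg : ((-1 : Polynomial R) ^ m) = Polynomial.C ((-1 : R) ^ m) := by simp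
    rw [hneg, Polynomial.coeff_C_mul, Polynomial.coeff_mul_C, hprod_coeff]
  have key : (-1 : R) ^ l * D l' = (-1) ^ m * ((-1) ^ (m - l) * E * W) := by
    rw [← hcoeff1, hcoeff2]
  have hsign : (-1 : R) ^ l * ((-1) ^ m * (-1) ^ (m - l)) = 1 := by
    rw [← pow_add, ← pow_add]
    have h2m : l + (m + (m - l)) = 2 * m := by omega
    rw [h2m, pow_mul]
    norm_num
  calc D l' = (-1 : R) ^ l * ((-1 : R) ^ l * D l') := by
        rw [← mul_assoc, ← pow_add, ← two_mul, pow_mul]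
        norm_num
    _ = ((-1 : R) ^ l * ((-1) ^ m * (-1) ^ (m - l))) * (E * W) := by rw [key]; ring
    _ = E * W := by rw [hsign, one_mul]
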